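/- There exists a (not necessarily bounded) Baire class 2 function f : [0,1] → ℝ with L_f = T if and only if T is closed and the set {x ∈ [0,1] : T ∩ ({x} × ℝ) = ∅} is countable. -/

import Mathlib

open Set Filter Topology Metric
open scoped Classical

noncomputable section

/-- The graph of `f` restricted to the set `A`, as a subset of `ℝ × ℝ`. -/
def graphOn (A : Set ℝ) (f : ℝ → ℝ) : Set (ℝ × ℝ) :=
  {p : ℝ × ℝ | p.1 ∈ A ∧ p.2 = f p.1}

/-- The set of accumulation points of a set `G ⊆ ℝ × ℝ`. -/
def accPts (G : Set (ℝ × ℝ)) : Set (ℝ × ℝ) :=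
  {p : ℝ × ℝ | AccPt p (𝓟 G)}

/-- Baire class 1 on `[0,1]`: pointwise limit of continuous functions. -/
def Baire1 (f : ℝ → ℝ) : Prop :=
  ∃ g : ℕ → ℝ → ℝ, (∀ n, ContinuousOn (g n) (Icc 0 1)) ∧
    ∀ x ∈ Icc (0:ℝ) 1, Tendsto (fun n => g n x) atTop (𝓝 (f x))

/-- Baire class 2 on `[0,1]`: pointwise limit of Baire class 1 functions. -/
def Baire2 (f : ℝ → ℝ) : Prop :=
  ∃ g : ℕ → ℝ → ℝ, (∀ n, Baire1 (g n)) ∧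
    ∀ x ∈ Icc (0:ℝ) 1, Tendsto (fun n => g n x) atTop (𝓝 (f x))

/-- A set is meager relative to the subspace `[0,1]`. -/
def MeagreIn01 (D : Set ℝ) : Prop :=
  IsMeagre ((↑) ⁻¹' D : Set (Icc (0:ℝ) 1))

/-- Embedding of the plane into `ℝ × ℝ̄` (extended reals in the second coordinate). -/
def embedE (p : ℝ × ℝ) : ℝ × EReal := (p.1, (p.2 : EReal))

lemma baire1_of_seq (f : ℝ → ℝ) (g : ℕ → ℝ → ℝ) (hg : ∀ k, Continuous (g k))
    (h : ∀ x ∈ Icc (0:ℝ) 1, Tendsto (fun k => g k x) atTop (𝓝 (f x))) : Baire1 f :=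
  ⟨g, fun k => (hg k).continuousOn, h⟩

lemma baire1_continuous (f : ℝ → ℝ) (hf : Continuous f) : Baire1 f :=
  ⟨fun _ => f, fun _ => hf.continuousOn, fun _ _ => tendsto_const_nhds⟩

lemma Baire1.add {f g : ℝ → ℝ} (hf : Baire1 f) (hg : Baire1 g) :
    Baire1 (fun x => f x + g x) := by
  obtain ⟨F, hF, hFt⟩ := hf; obtain ⟨G, hG, hGt⟩ := hg
  exact ⟨fun n x => F n x + G n x, fun n => (hF n).add (hG n),
    fun x hx => (hFt x hx).add (hGt x hx)⟩

lemma Baire1.mul {f g : ℝ → ℝ} (hf : Baire1 f) (hg : Baire1 g) :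
    Baire1 (fun x => f x * g x) := by
  obtain ⟨F, hF, hFt⟩ := hf; obtain ⟨G, hG, hGt⟩ := hg
  exact ⟨fun n x => F n x * G n x, fun n => (hF n).mul (hG n),
    fun x hx => (hFt x hx).mul (hGt x hx)⟩

lemma baire1_sum {ι : Type*} (s : Finset ι) (F : ι → ℝ → ℝ) (h : ∀ i ∈ s, Baire1 (F i)) :
    Baire1 (fun x => ∑ i ∈ s, F i x) := by
  classical
  induction s using Finset.cons_induction with
  | empty => simpa using baire1_continuous _ continuous_const
  | cons a s ha ih =>
    simp only [Finset.sum_cons]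
    exact (h a (Finset.mem_cons_self a s)).add
      (ih fun i hi => h i (Finset.mem_cons_of_mem hi))

lemma baire1_indicator {K : Set ℝ} (hK : IsClosed K) :
    Baire1 (fun x => if x ∈ K then (1:ℝ) else 0) := by
  rcases eq_empty_or_nonempty K with rfl | hne
  · simpa using baire1_continuous _ continuous_const
  · apply baire1_of_seq _ (fun k x => max 0 (1 - k * infDist x K))
    · intro k
      exact continuous_const.max (continuous_const.sub
        (continuous_const.mul (continuous_infDist_pt K)))
    · intro x _
      by_cases hx : x ∈ K
      · rw [if_pos hx]
        have heq : (fun k : ℕ => max (0:ℝ) (1 - k * infDist x K)) = fun _ => 1 := by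
          funext k; rw [infDist_zero_of_mem hx]; simp
        rw [heq]; exact tendsto_const_nhds
      · have hd : 0 < infDist x K := (hK.notMem_iff_infDist_pos hne).1 hx
        rw [if_neg hx]
        have hev : ∀ᶠ k : ℕ in atTop, max 0 (1 - k * infDist x K) = 0 := by
          obtain ⟨N, hN⟩ := exists_nat_gt (1 / infDist x K)
          filter_upwards [eventually_ge_atTop N] with k hk
          have : (1:ℝ) < k * infDist x K := by
            have : (1:ℝ)/infDist x K < k := lt_of_lt_of_le hN (by exact_mod_cast hk)
            calc (1:ℝ) = (1/infDist x K) * infDist x K := by field_simp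
            _ < k * infDist x K := by exact mul_lt_mul_of_pos_right this hd
          simp [max_eq_left, sub_nonpos.2 this.le]
        exact Tendsto.congr' (hev.mono fun k hk => hk.symm) tendsto_const_nhds

lemma accPt_inter_nhd {p : ℝ×ℝ} {G U : Set (ℝ×ℝ)} (hU : U ∈ 𝓝 p) (h : AccPt p (𝓟 G)) :
    AccPt p (𝓟 (G ∩ U)) := by
  rw [accPt_iff_nhds] at h ⊢
  intro V hV
  obtain ⟨y, ⟨hyV, hyG⟩, hyne⟩ := h (V ∩ U) (inter_mem hV hU)
  exact ⟨y, ⟨hyV.1, hyG, hyV.2⟩, hyne⟩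

lemma not_accPt_of_finite {p : ℝ×ℝ} {S : Set (ℝ×ℝ)} (hfin : S.Finite) : ¬ AccPt p (𝓟 S) := by
  intro h
  rw [accPt_iff_nhds] at h
  have hcl : IsClosed (S \ {p}) := (hfin.subset diff_subset).isClosed
  obtain ⟨y, ⟨hy1, hy2⟩, hyne⟩ := h _ (hcl.isOpen_compl.mem_nhds (by simp))
  exact hy1 ⟨hy2, hyne⟩

lemma not_accPt_of_finite_inter {p : ℝ×ℝ} {G U : Set (ℝ×ℝ)} (hU : U ∈ 𝓝 p)
    (hfin : (G ∩ U).Finite) : ¬ AccPt p (𝓟 G) :=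
  fun h => not_accPt_of_finite hfin (accPt_inter_nhd hU h)

lemma isClosed_accPts (G : Set (ℝ×ℝ)) : IsClosed (accPts G) := by
  rw [← isOpen_compl_iff, isOpen_iff_mem_nhds]
  intro p hp
  rw [mem_compl_iff, accPts, mem_setOf_eq, accPt_iff_nhds] at hp
  push_neg at hp
  obtain ⟨U, hU, hUp⟩ := hp
  obtain ⟨V, hVU, hVo, hpV⟩ := _root_.mem_nhds_iff.1 hU
  refine Filter.mem_of_superset (hVo.mem_nhds hpV) ?_
  intro q hq
  simp only [mem_compl_iff, accPts, mem_setOf_eq, accPt_iff_nhds]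
  push_neg
  by_cases hqp : q = p
  · subst hqp
    exact ⟨V, hVo.mem_nhds hq, fun y hy => hUp y ⟨hVU hy.1, hy.2⟩⟩
  · refine ⟨V \ {p}, (hVo.sdiff isClosed_singleton).mem_nhds ⟨hq, hqp⟩, ?_⟩
    intro y hy
    exact absurd (hUp y ⟨hVU hy.1.1, hy.2⟩) hy.1.2

lemma not_countable_Icc_inter_ball {a : ℝ} (ha : a ∈ Icc (0:ℝ) 1) {r : ℝ} (hr : 0 < r) :
    ¬ (Icc (0:ℝ) 1 ∩ ball a r).Countable := by
  obtain ⟨l, u, hlu, hsub⟩ : ∃ l u : ℝ, l < u ∧ Ioo l u ⊆ Icc (0:ℝ) 1 ∩ ball a r := by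
    rcases lt_or_eq_of_le ha.2 with h1 | h1
    · refine ⟨a, min (a + r) 1, by simp [h1, hr], ?_⟩
      rintro x ⟨hx1, hx2⟩
      have hx3 : x < a + r := lt_of_lt_of_le hx2 (min_le_left _ _)
      have hx4 : x ≤ 1 := le_of_lt (lt_of_lt_of_le hx2 (min_le_right _ _))
      refine ⟨⟨le_trans ha.1 hx1.le, hx4⟩, ?_⟩
      rw [mem_ball, Real.dist_eq, abs_lt]
      constructor <;> linarith
    · refine ⟨max 0 (1 - r), 1, max_lt (by norm_num) (by linarith), ?_⟩
      rintro x ⟨hx1, hx2⟩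
      have hx3 : 1 - r < x := lt_of_le_of_lt (le_max_right _ _) hx1
      have hx0 : (0:ℝ) ≤ x := le_of_lt (lt_of_le_of_lt (le_max_left _ _) hx1)
      refine ⟨⟨hx0, hx2.le⟩, ?_⟩
      rw [mem_ball, Real.dist_eq, abs_lt, h1]
      constructor <;> linarith
  intro h
  have hcnt : (Ioo l u).Countable := h.mono hsub
  have : Cardinal.mk (Ioo l u) ≤ Cardinal.aleph0 := by
    rw [Cardinal.mk_le_aleph0_iff]
    exact countable_coe_iff.2 hcnt
  rw [Cardinal.mk_Ioo_real hlu] at this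
  exact absurd this (not_le.2 Cardinal.aleph0_lt_continuum)

lemma exists_inj_seq (S : ℕ → Set ℝ) (C : Set ℝ) (hC : C.Countable)
    (hS : ∀ j, ¬ (S j).Countable) :
    ∃ u : ℕ → ℝ, Function.Injective u ∧ ∀ j, u j ∈ S j ∧ u j ∉ C := by
  have key : ∀ (j : ℕ) (w : ℕ → ℝ), ∃ x, x ∈ S j ∧ x ∉ C ∧ ∀ i < j, x ≠ w i := by
    intro j w
    have hcc : (C ∪ (w '' (Iio j))).Countable :=
      hC.union ((Set.finite_Iio j).image w).countable
    have : (S j \ (C ∪ w '' (Iio j))).Nonempty := by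
      rw [Set.nonempty_iff_ne_empty]
      intro hemp
      exact hS j (hcc.mono (by rw [diff_eq_empty] at hemp; exact hemp))
    obtain ⟨x, hx1, hx2⟩ := this
    refine ⟨x, hx1, fun h => hx2 (Or.inl h), fun i hi h => hx2 (Or.inr ⟨i, hi, h.symm⟩)⟩
  let pick : ℕ → (ℕ → ℝ) → ℝ := fun j w => Classical.choose (key j w)
  let v : ℕ → (ℕ → ℝ) := fun j => Nat.rec (fun _ => 0)
    (fun j w => Function.update w j (pick j w)) j
  have hv : ∀ j, v (j+1) = Function.update (v j) j (pick j (v j)) := fun j => rfl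
  set u : ℕ → ℝ := fun j => v (j+1) j with hu
  have hstab : ∀ j i, i < j → v j i = u i := by
    intro j
    induction j with
    | zero => intro i hi; omega
    | succ j ih =>
      intro i hi
      rcases Nat.lt_or_ge i j with h | h
      · rw [hv j, Function.update_of_ne (by omega)]
        exact ih i h
      · have : i = j := by omega
        subst this; rfl
  have huj : ∀ j, u j = pick j (v j) := by
    intro j; rw [hu]; simp only [hv j, Function.update_self]
  have hspec : ∀ j, u j ∈ S j ∧ u j ∉ C ∧ ∀ i < j, u j ≠ v j i := by
    intro j; rw [huj j]; exact Classical.choose_spec (key j (v j))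
  refine ⟨u, ?_, fun j => ⟨(hspec j).1, (hspec j).2.1⟩⟩
  intro i j hij
  by_contra hne
  rcases Nat.lt_or_ge i j with h | h
  · exact (hspec j).2.2 i h (by rw [hstab j i h, ← hij])
  · have h' : j < i := by omega
    exact (hspec i).2.2 j h' (by rw [hstab i j h']; exact hij)


lemma Baire1.sub {f g : ℝ → ℝ} (hf : Baire1 f) (hg : Baire1 g) :
    Baire1 (fun x => f x - g x) := by
  have h1 := hf.add ((baire1_continuous (fun _ => (-1:ℝ)) continuous_const).mul hg)
  have h2 : (fun x => f x + (fun _ => (-1:ℝ)) x * g x) = (fun x => f x - g x) := by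
    funext x; ring
  rw [← h2]; exact h1

theorem exists_selection (T : Set (ℝ×ℝ)) (hT : ∀ p ∈ T, p.1 ∈ Icc (0:ℝ) 1)
    (hTc : IsClosed T) :
    ∃ (φ : ℝ → ℝ) (τ : ℕ → ℝ → ℝ),
      (∀ j, Baire1 (τ j)) ∧
      (∀ x : ℝ, Tendsto (fun j => τ j x) atTop (𝓝 (φ x))) ∧
      (∀ x : ℝ, (∃ y, (x,y) ∈ T) → (x, φ x) ∈ T) := by
  -- the compact slices
  set K : ℕ → Set ℝ := fun i => Prod.fst '' (T ∩ (univ ×ˢ Icc (-(i:ℝ)) i)) with hK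
  have hmemK : ∀ (i : ℕ) (x : ℝ), x ∈ K i ↔ ∃ y, (x,y) ∈ T ∧ -(i:ℝ) ≤ y ∧ y ≤ i := by
    intro i x
    constructor
    · rintro ⟨p, ⟨hp1, hp2⟩, rfl⟩
      exact ⟨p.2, by simpa using hp1, hp2.2.1, hp2.2.2⟩
    · rintro ⟨y, hy1, hy2, hy3⟩
      exact ⟨(x,y), ⟨hy1, ⟨trivial, hy2, hy3⟩⟩, rfl⟩
  have hslab : ∀ (i : ℕ) (c : ℝ), IsCompact (Prod.fst '' (T ∩ (univ ×ˢ Icc (-(i:ℝ)) c))) := by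
    intro i c
    have hcomp : IsCompact (Icc (0:ℝ) 1 ×ˢ Icc (-(i:ℝ)) c) := isCompact_Icc.prod isCompact_Icc
    have hsub : T ∩ (univ ×ˢ Icc (-(i:ℝ)) c) ⊆ Icc (0:ℝ) 1 ×ˢ Icc (-(i:ℝ)) c := by
      rintro p ⟨hp1, hp2⟩
      exact ⟨hT p hp1, hp2.2⟩
    exact (hcomp.of_isClosed_subset (hTc.inter (isClosed_univ.prod isClosed_Icc)) hsub).image
      continuous_fst
  have hKcomp : ∀ i, IsCompact (K i) := fun i => hslab i i
  have hKmono : Monotone K := by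
    apply monotone_nat_of_le_succ
    intro i x hx
    rw [hmemK] at hx ⊢
    obtain ⟨y, h1, h2, h3⟩ := hx
    refine ⟨y, h1, ?_, ?_⟩ <;> push_cast <;> linarith
  -- fiber slices and their inf
  set Y : ℕ → ℝ → Set ℝ := fun i x => {y | (x,y) ∈ T} ∩ Icc (-(i:ℝ)) i with hY
  have hYclosed : ∀ i x, IsClosed (Y i x) := fun i x =>
    (hTc.preimage (Continuous.prodMk_right x)).inter isClosed_Icc
  have hYbdd : ∀ i x, BddBelow (Y i x) := fun i x => ⟨-(i:ℝ), fun y hy => hy.2.1⟩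
  have hYne : ∀ i x, x ∈ K i → (Y i x).Nonempty := by
    intro i x hx
    obtain ⟨y, h1, h2, h3⟩ := (hmemK i x).1 hx
    exact ⟨y, h1, h2, h3⟩
  set σ : ℕ → ℝ → ℝ := fun i x => sInf (Y i x) with hσ
  have hσmem : ∀ i x, x ∈ K i → σ i x ∈ Y i x := fun i x hx =>
    (hYclosed i x).csInf_mem (hYne i x hx) (hYbdd i x)
  have hσle : ∀ i x y, y ∈ Y i x → σ i x ≤ y := fun i x y hy => csInf_le (hYbdd i x) hy
  -- level sets are compact
  have hlevel : ∀ (i : ℕ) (c : ℝ), c ≤ i →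
      {x' | x' ∈ K i ∧ σ i x' ≤ c} = Prod.fst '' (T ∩ (univ ×ˢ Icc (-(i:ℝ)) c)) := by
    intro i c hc
    ext x'
    constructor
    · rintro ⟨hx', hs⟩
      have hm := hσmem i x' hx'
      exact ⟨(x', σ i x'), ⟨hm.1, ⟨trivial, hm.2.1, hs⟩⟩, rfl⟩
    · rintro ⟨p, ⟨hp1, hp2⟩, rfl⟩
      have hyY : p.2 ∈ Y i p.1 := ⟨by simpa using hp1, hp2.2.1, le_trans hp2.2.2 hc⟩
      have hxK : p.1 ∈ K i := (hmemK i p.1).2 ⟨p.2, by simpa using hp1, hp2.2.1,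
        le_trans hp2.2.2 hc⟩
      exact ⟨hxK, le_trans (hσle i p.1 p.2 hyY) hp2.2.2⟩
  -- Moreau-Yosida approximations
  set m : ℕ → ℕ → ℝ → ℝ :=
    fun i k x => sInf ((fun x' => σ i x' + k * |x - x'|) '' K i) with hm
  have hσlb : ∀ i x', x' ∈ K i → -(i:ℝ) ≤ σ i x' := fun i x' hx' => (hσmem i x' hx').2.1
  have hσub : ∀ i x', x' ∈ K i → σ i x' ≤ (i:ℝ) := fun i x' hx' => (hσmem i x' hx').2.2
  have hmbdd : ∀ (i k : ℕ) (x : ℝ), BddBelow ((fun x' => σ i x' + (k:ℝ) * |x - x'|) '' K i) := by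
    rintro i k x
    refine ⟨-(i:ℝ), ?_⟩
    rintro b ⟨x', hx', rfl⟩
    show -(i:ℝ) ≤ σ i x' + (k:ℝ) * |x - x'|
    have h1 := hσlb i x' hx'
    have h2 : (0:ℝ) ≤ k * |x - x'| := by positivity
    linarith
  have hmlip : ∀ i k, ∀ x y : ℝ, (K i).Nonempty → m i k x ≤ m i k y + k * |x - y| := by
    intro i k x y hne
    rw [hm]
    rw [← sub_le_iff_le_add]
    apply le_csInf (hne.image _)
    rintro b ⟨x', hx', rfl⟩
    rw [sub_le_iff_le_add]
    show m i k x ≤ (σ i x' + (k:ℝ) * |y - x'|) + (k:ℝ) * |x - y|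
    have h1 : m i k x ≤ σ i x' + k * |x - x'| := csInf_le (hmbdd i k x) ⟨x', hx', rfl⟩
    have h2 : |x - x'| ≤ |x - y| + |y - x'| := abs_sub_le x y x'
    have hk : (0:ℝ) ≤ (k:ℝ) := Nat.cast_nonneg k
    nlinarith
  have hmcont : ∀ i k, Continuous (m i k) := by
    intro i k
    rcases eq_empty_or_nonempty (K i) with hKe | hne
    · have : m i k = fun _ => 0 := by
        funext x; rw [hm]; simp [hKe, Real.sInf_empty]
      rw [this]; exact continuous_const
    · apply LipschitzWith.continuous (K := (k : NNReal))
      apply LipschitzWith.of_dist_le_mul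
      intro x y
      rw [Real.dist_eq, Real.dist_eq, abs_le]
      constructor
      · have := hmlip i k y x hne
        rw [abs_sub_comm] at this
        push_cast
        linarith
      · have := hmlip i k x y hne
        push_cast
        linarith
  have hmle : ∀ i k x, x ∈ K i → m i k x ≤ σ i x := by
    intro i k x hx
    have : σ i x + k * |x - x| = σ i x := by simp
    calc m i k x ≤ σ i x + k * |x - x| := csInf_le (hmbdd i k x) ⟨x, hx, rfl⟩
    _ = σ i x := this
  have hmlower : ∀ i x, x ∈ K i → ∀ ε : ℝ, 0 < ε → ∃ N : ℕ, ∀ k ≥ N,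
      σ i x - ε ≤ m i k x := by
    intro i x hx ε hε
    set F := {x' | x' ∈ K i ∧ σ i x' ≤ σ i x - ε} with hF
    have hFc : IsCompact F := by
      rw [hF, hlevel i (σ i x - ε) (by linarith [hσub i x hx])]
      exact hslab i _
    have hxF : x ∉ F := by
      rintro ⟨-, h⟩; linarith
    rcases eq_empty_or_nonempty F with hFe | hFne
    · refine ⟨0, fun k _ => ?_⟩
      apply le_csInf (Set.Nonempty.image _ ⟨x, hx⟩)
      rintro b ⟨x', hx', rfl⟩
      show σ i x - ε ≤ σ i x' + (k:ℝ) * |x - x'|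
      have : ¬ (σ i x' ≤ σ i x - ε) := by
        intro h; rw [eq_empty_iff_forall_notMem] at hFe; exact hFe x' ⟨hx', h⟩
      have hk : (0:ℝ) ≤ (k:ℝ) * |x - x'| := by positivity
      linarith
    · have hδ : 0 < infDist x F := (hFc.isClosed.notMem_iff_infDist_pos hFne).1 hxF
      obtain ⟨N, hN⟩ := exists_nat_ge ((σ i x + i) / infDist x F)
      refine ⟨N, fun k hk => ?_⟩
      apply le_csInf (Set.Nonempty.image _ ⟨x, hx⟩)
      rintro b ⟨x', hx', rfl⟩
      show σ i x - ε ≤ σ i x' + (k:ℝ) * |x - x'|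
      by_cases hx'F : x' ∈ F
      · have hd : infDist x F ≤ |x - x'| := by
          rw [← Real.dist_eq]; exact infDist_le_dist_of_mem hx'F
        have h1 : σ i x + i ≤ N * infDist x F := by
          rw [div_le_iff₀ hδ] at hN; linarith
        have h2 : (N:ℝ) * infDist x F ≤ k * |x - x'| := by
          apply mul_le_mul (by exact_mod_cast hk) hd hδ.le (Nat.cast_nonneg k)
        have h3 := hσlb i x' hx'
        linarith
      · have : ¬ (σ i x' ≤ σ i x - ε) := fun h => hx'F ⟨hx', h⟩
        have hk0 : (0:ℝ) ≤ k * |x - x'| := by positivity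
        linarith
  have hmtendsto : ∀ i x, x ∈ K i → Tendsto (fun k => m i k x) atTop (𝓝 (σ i x)) := by
    intro i x hx
    rw [Metric.tendsto_atTop]
    intro ε hε
    obtain ⟨N, hN⟩ := hmlower i x hx (ε/2) (by linarith)
    refine ⟨N, fun k hk => ?_⟩
    have h1 := hN k hk
    have h2 := hmle i k x hx
    rw [Real.dist_eq, abs_lt]
    constructor <;> linarith
  -- the cutoff and the Baire-1 slice selectors
  set c : ℕ → ℕ → ℝ → ℝ := fun i k x => max 0 (1 - k * infDist x (K i)) with hc
  have hccont : ∀ i k, Continuous (c i k) := fun i k =>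
    continuous_const.max (continuous_const.sub
      (continuous_const.mul (continuous_infDist_pt (K i))))
  set S : ℕ → ℝ → ℝ := fun i x => if x ∈ K i then σ i x else 0 with hS
  have hSb1 : ∀ i, Baire1 (S i) := by
    intro i
    apply baire1_of_seq _ (fun k x => m i k x * c i k x)
      (fun k => (hmcont i k).mul (hccont i k))
    intro x _
    by_cases hx : x ∈ K i
    · have hc1 : ∀ k : ℕ, c i k x = 1 := by
        intro k; rw [hc]; simp [infDist_zero_of_mem hx]
      have : (fun k => m i k x * c i k x) = fun k => m i k x := by
        funext k; rw [hc1 k, mul_one]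
      rw [this, hS]
      simp only [hx, if_pos]
      exact hmtendsto i x hx
    · rw [hS]; simp only [hx, if_neg, not_false_iff]
      rcases eq_empty_or_nonempty (K i) with hKe | hne
      · have : ∀ k : ℕ, m i k x * c i k x = 0 := by
          intro k; rw [hm]; simp [hKe, Real.sInf_empty]
        simpa [this] using tendsto_const_nhds
      · have hd : 0 < infDist x (K i) :=
          ((hKcomp i).isClosed.notMem_iff_infDist_pos hne).1 hx
        have hev : ∀ᶠ k : ℕ in atTop, m i k x * c i k x = 0 := by
          obtain ⟨N, hN⟩ := exists_nat_gt (1 / infDist x (K i))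
          filter_upwards [eventually_ge_atTop N] with k hk
          have h1 : (1:ℝ) < k * infDist x (K i) := by
            have h2 : (1:ℝ)/infDist x (K i) < k := lt_of_lt_of_le hN (by exact_mod_cast hk)
            calc (1:ℝ) = (1/infDist x (K i)) * infDist x (K i) := by field_simp
            _ < k * infDist x (K i) := mul_lt_mul_of_pos_right h2 hd
          have : c i k x = 0 := by
            rw [hc]; simp only; rw [max_eq_left (by linarith)]
          rw [this, mul_zero]
        exact Tendsto.congr' (hev.mono fun k hk => hk.symm) tendsto_const_nhds
  set χ : ℕ → ℝ → ℝ := fun i x => if x ∈ K i then (1:ℝ) else 0 with hχ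
  have hχb1 : ∀ i, Baire1 (χ i) := fun i => baire1_indicator (hKcomp i).isClosed
  set τ : ℕ → ℝ → ℝ := fun j x =>
    S 0 x * χ 0 x + ∑ i ∈ Finset.range j, S (i+1) x * (χ (i+1) x - χ i x) with hτ
  have hτb1 : ∀ j, Baire1 (τ j) := by
    intro j
    apply Baire1.add ((hSb1 0).mul (hχb1 0))
    exact baire1_sum (Finset.range j) (fun i x => S (i+1) x * (χ (i+1) x - χ i x))
      (fun i _ => (hSb1 (i+1)).mul ((hχb1 (i+1)).sub (hχb1 i)))
  -- evaluation of τ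
  set φ : ℝ → ℝ := fun x => if hx : ∃ i, x ∈ K i then σ (Nat.find hx) x else 0 with hφ
  have hτeval : ∀ x : ℝ, ∀ j, ∀ (hx : ∃ i, x ∈ K i), Nat.find hx ≤ j → τ j x = φ x := by
    intro x j hx hj
    set N := Nat.find hx with hN
    have hxN : x ∈ K N := Nat.find_spec hx
    have hlt : ∀ i, i < N → x ∉ K i := fun i hi => Nat.find_min hx hi
    have hχval : ∀ i, χ i x = if N ≤ i then 1 else 0 := by
      intro i
      rcases le_or_gt N i with h | h
      · rw [hχ]; simp only [if_pos (hKmono h hxN), if_pos h]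
      · rw [hχ]; simp only [if_neg (hlt i h), if_neg (not_le.2 h)]
    have hφval : φ x = σ N x := by rw [hφ]; simp only [dif_pos hx]; rfl
    rw [hτ, hφval]
    simp only
    rcases Nat.eq_zero_or_pos N with hN0 | hNpos
    · have hx0 : x ∈ K 0 := hN0 ▸ hxN
      have hsum : ∀ i ∈ Finset.range j, S (i+1) x * (χ (i+1) x - χ i x) = 0 := by
        intro i _
        rw [hχval (i+1), hχval i, if_pos (by omega), if_pos (by omega)]
        ring
      rw [Finset.sum_congr rfl hsum]
      rw [hχval 0, if_pos (by omega), hS]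
      simp only [if_pos hx0]
      rw [hN0]; ring_nf; simp
    · obtain ⟨M, hM⟩ : ∃ M, N = M + 1 := ⟨N - 1, by omega⟩
      have hfirst : χ 0 x = 0 := by rw [hχval 0, if_neg (by omega)]
      have hsum : ∑ i ∈ Finset.range j, S (i+1) x * (χ (i+1) x - χ i x) = σ N x := by
        rw [Finset.sum_eq_single M]
        · rw [hχval (M+1), hχval M, if_pos (by omega), if_neg (by omega), hS]
          simp only [← hM, if_pos hxN]
          ring
        · intro b _ hbM
          rw [hχval (b+1), hχval b]
          rcases Nat.lt_or_ge b M with h | h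
          · rw [if_neg (by omega), if_neg (by omega)]; ring
          · have hbge : M + 1 ≤ b := by omega
            rw [if_pos (by omega), if_pos (by omega)]; ring
        · intro hMj
          exfalso
          rw [Finset.mem_range] at hMj
          omega
      rw [hsum, hfirst, mul_zero, zero_add]
  have hτzero : ∀ x : ℝ, (¬ ∃ i, x ∈ K i) → ∀ j, τ j x = 0 := by
    intro x hx j
    have hχ0 : ∀ i, χ i x = 0 := by
      intro i; rw [hχ]; simp only [if_neg (fun h => hx ⟨i, h⟩)]
    rw [hτ]
    simp only
    have : ∀ i ∈ Finset.range j, S (i+1) x * (χ (i+1) x - χ i x) = 0 := by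
      intro i _; rw [hχ0 (i+1), hχ0 i]; ring
    rw [Finset.sum_congr rfl this, hχ0 0]
    simp
  refine ⟨φ, τ, hτb1, ?_, ?_⟩
  · intro x
    by_cases hx : ∃ i, x ∈ K i
    · apply tendsto_atTop_of_eventually_const (i₀ := Nat.find hx)
      intro j hj
      exact hτeval x j hx hj
    · have hφ0 : φ x = 0 := by rw [hφ]; simp only [dif_neg hx]
      rw [hφ0]
      apply tendsto_atTop_of_eventually_const (i₀ := 0)
      intro j _
      exact hτzero x hx j
  · rintro x ⟨y, hy⟩
    obtain ⟨i, hi⟩ := exists_nat_ge |y|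
    have hx : ∃ i, x ∈ K i := ⟨i, (hmemK i x).2 ⟨y, hy, by
      rw [abs_le] at hi; exact hi.1, by rw [abs_le] at hi; exact hi.2⟩⟩
    have hφval : φ x = σ (Nat.find hx) x := by rw [hφ]; simp only [dif_pos hx]
    rw [hφval]
    exact (hσmem (Nat.find hx) x (Nat.find_spec hx)).1

lemma exists_dense_seq (T : Set (ℝ×ℝ)) (hne : T.Nonempty) :
    ∃ A : ℕ → ℝ×ℝ, (∀ n, A n ∈ T) ∧ ∀ p ∈ T, ∀ ε : ℝ, 0 < ε → ∃ n, dist (A n) p < ε := by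
  obtain ⟨t₀, ht₀⟩ := hne
  obtain ⟨Q, hQc, hQd⟩ := TopologicalSpace.exists_countable_dense (ℝ×ℝ)
  obtain ⟨q, hq⟩ := Set.Countable.exists_eq_range hQc hQd.nonempty
  set A : ℕ → ℝ×ℝ := fun j =>
    if h : (T ∩ ball (q (Nat.unpair j).1) ((1/2)^((Nat.unpair j).2))).Nonempty
    then h.choose else t₀ with hA
  refine ⟨A, ?_, ?_⟩
  · intro j
    rw [hA]
    by_cases h : (T ∩ ball (q (Nat.unpair j).1) ((1/2)^((Nat.unpair j).2))).Nonempty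
    · simp only [dif_pos h]; exact h.choose_spec.1
    · simp only [dif_neg h]; exact ht₀
  · intro p hp ε hε
    obtain ⟨mm, hmm⟩ := exists_pow_lt_of_lt_one (show (0:ℝ) < ε/2 by linarith)
      (show (1:ℝ)/2 < 1 by norm_num)
    have hpc : p ∈ closure Q := hQd p
    rw [Metric.mem_closure_iff] at hpc
    obtain ⟨q', hq', hdq⟩ := hpc ((1/2)^mm) (by positivity)
    obtain ⟨i, rfl⟩ : ∃ i, q i = q' := by
      rw [hq] at hq'; exact hq'
    refine ⟨Nat.pair i mm, ?_⟩
    have hball : p ∈ T ∩ ball (q i) ((1/2)^mm) := ⟨hp, by rwa [mem_ball]⟩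
    have hA1 : A (Nat.pair i mm) ∈ T ∩ ball (q i) ((1/2)^mm) := by
      rw [hA]
      simp only [Nat.unpair_pair]
      rw [dif_pos ⟨p, hball⟩]
      exact (Exists.choose_spec (⟨p, hball⟩ :
        (T ∩ ball (q i) ((1/2)^mm)).Nonempty))
    calc dist (A (Nat.pair i mm)) p ≤ dist (A (Nat.pair i mm)) (q i) + dist (q i) p :=
          dist_triangle _ _ _
    _ < (1/2)^mm + (1/2)^mm := by
        apply add_lt_add (hA1.2) (by rwa [dist_comm])
    _ < ε := by linarith
lemma accPt_of_seq {p : ℝ×ℝ} {G : Set (ℝ×ℝ)} (z : ℕ → ℝ×ℝ) (hz : ∀ n, z n ∈ G)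
    (hne : ∀ n, z n ≠ p) (hlim : Tendsto z atTop (𝓝 p)) : AccPt p (𝓟 G) := by
  rw [accPt_iff_nhds]
  intro U hU
  obtain ⟨n, hn⟩ := (hlim.eventually (eventually_mem_nhds_iff.2 hU)).exists
  exact ⟨z n, ⟨mem_of_mem_nhds hn, hz n⟩, hne n⟩

lemma forward_dir (f : ℝ → ℝ) :
    {x ∈ Icc (0:ℝ) 1 | ∀ y : ℝ, (x, y) ∉ accPts (graphOn (Icc 0 1) f)}.Countable := by
  set G := graphOn (Icc 0 1) f with hG
  set N := {x ∈ Icc (0:ℝ) 1 | ∀ y : ℝ, (x, y) ∉ accPts G} with hN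
  have key : ∀ x ∈ N, ∃ δ : ℝ, 0 < δ ∧ ∀ t ∈ Icc (0:ℝ) 1, t ≠ x → |t - x| < δ →
      |f x| + 1 < |f t| := by
    intro x hxN
    by_contra hcon
    push_neg at hcon
    have hseq : ∀ n : ℕ, ∃ t, t ∈ Icc (0:ℝ) 1 ∧ t ≠ x ∧ |t - x| < 1/(n+1) ∧
        |f t| ≤ |f x| + 1 := by
      intro n
      obtain ⟨t, ht1, ht2, ht3, ht4⟩ := hcon (1/(n+1)) (by positivity)
      exact ⟨t, ht1, ht2, ht3, ht4⟩
    choose t ht1 ht2 ht3 ht4 using hseq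
    set C := |f x| + 1 with hC
    have hcomp : IsCompact (Icc (0:ℝ) 1 ×ˢ Icc (-C) C) := isCompact_Icc.prod isCompact_Icc
    have hmem : ∀ n, (t n, f (t n)) ∈ Icc (0:ℝ) 1 ×ˢ Icc (-C) C := by
      intro n
      refine ⟨ht1 n, ?_⟩
      have := abs_le.1 (ht4 n)
      exact ⟨this.1, this.2⟩
    obtain ⟨a, _, ψ, hψmono, hψlim⟩ := hcomp.tendsto_subseq hmem
    have htx : Tendsto (fun n => t (ψ n)) atTop (𝓝 x) := by
      rw [Metric.tendsto_atTop]
      intro ε hε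
      obtain ⟨M, hM⟩ := exists_nat_gt (1/ε)
      refine ⟨M, fun n hn => ?_⟩
      have h1 : |t (ψ n) - x| < 1/(ψ n + 1) := ht3 (ψ n)
      have h2 : M ≤ ψ n := le_trans hn (hψmono.le_apply)
      have hcast : (M:ℝ) ≤ (ψ n : ℝ) := Nat.cast_le.2 h2
      have h3 : (1:ℝ)/(ψ n + 1) ≤ 1/(M+1) :=
        one_div_le_one_div_of_le (by positivity) (by linarith)
      have h4 : (1:ℝ)/(M+1) < ε := by
        rw [div_lt_iff₀ (by positivity)]
        rw [div_lt_iff₀ hε] at hM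
        nlinarith [hε]
      rw [Real.dist_eq]
      linarith
    have hfst : Tendsto (fun n => t (ψ n)) atTop (𝓝 a.1) :=
      (continuous_fst.tendsto a).comp hψlim
    have ha1 : a.1 = x := tendsto_nhds_unique hfst htx
    have hacc : AccPt (x, a.2) (𝓟 G) := by
      apply accPt_of_seq (fun n => (t (ψ n), f (t (ψ n))))
      · intro n; exact ⟨ht1 (ψ n), rfl⟩
      · intro n
        intro hcontra
        apply ht2 (ψ n)
        have := congrArg Prod.fst hcontra
        simpa using this
      · rw [show ((x : ℝ), a.2) = a from Prod.ext ha1.symm rfl]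
        exact hψlim
    exact hxN.2 a.2 hacc
  choose δ hδpos hδ using key
  have key2 : ∀ x (hx : x ∈ N), ∃ pq : ℚ × ℚ, ((pq.1:ℝ) < x ∧ (x:ℝ) < pq.2) ∧
      ∀ t ∈ Icc (0:ℝ) 1, t ≠ x → (pq.1:ℝ) < t → t < pq.2 → |f x| + 1 < |f t| := by
    intro x hx
    obtain ⟨P, hP1, hP2⟩ := exists_rat_btwn (show x - δ x hx < x by linarith [hδpos x hx])
    obtain ⟨q, hq1, hq2⟩ := exists_rat_btwn (show x < x + δ x hx by linarith [hδpos x hx])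
    refine ⟨(P, q), ⟨hP2, hq1⟩, ?_⟩
    intro t ht htne h1 h2
    apply hδ x hx t ht htne
    rw [abs_lt]
    constructor <;> simp only at h1 h2 <;> [linarith; linarith]
  choose pq hpq1 hpq2 using key2
  have : Countable ↥N := by
    have hinj : Function.Injective (fun e : ↥N => pq e.1 e.2) := by
      rintro e e' heq
      have heq' : pq e.1 e.2 = pq e'.1 e'.2 := heq
      by_contra hne
      have hxne : (e:ℝ) ≠ (e':ℝ) := fun h => hne (Subtype.ext h)
      have h1 := hpq1 e.1 e.2
      have h2 := hpq1 e'.1 e'.2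
      rw [heq'] at h1
      have hIcc : (e':ℝ) ∈ Icc (0:ℝ) 1 := e'.2.1
      have hIcc' : (e:ℝ) ∈ Icc (0:ℝ) 1 := e.2.1
      have hlt1 : |f e| + 1 < |f e'| :=
        hpq2 e.1 e.2 e' hIcc hxne.symm (by rw [heq']; exact h2.1) (by rw [heq']; exact h2.2)
      have hlt2 : |f e'| + 1 < |f e| :=
        hpq2 e'.1 e'.2 e hIcc' hxne (h1.1) (h1.2)
      linarith
    exact hinj.countable
  exact countable_coe_iff.1 this

theorem reverse_dir (T : Set (ℝ × ℝ)) (hT : ∀ p ∈ T, p.1 ∈ Icc (0:ℝ) 1)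
    (hTc : IsClosed T)
    (hcnt : {x ∈ Icc (0:ℝ) 1 | ∀ y : ℝ, (x, y) ∉ T}.Countable) :
    ∃ f : ℝ → ℝ, Baire2 f ∧ accPts (graphOn (Icc 0 1) f) = T := by
  set E := {x ∈ Icc (0:ℝ) 1 | ∀ y : ℝ, (x, y) ∉ T} with hE
  have hTne : T.Nonempty := by
    rw [nonempty_iff_ne_empty]
    rintro rfl
    have hEeq : E = Icc (0:ℝ) 1 := by
      ext x; simp [hE]
    rw [hEeq] at hcnt
    exact not_countable_Icc_inter_ball (show (0:ℝ) ∈ Icc (0:ℝ) 1 by norm_num) one_pos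
      (hcnt.mono inter_subset_left)
  obtain ⟨φ, τ, hτb1, hτlim, hφsel⟩ := exists_selection T hT hTc
  obtain ⟨A, hAT, hAdense⟩ := exists_dense_seq T hTne
  obtain ⟨ι, hι⟩ := Set.countable_iff_exists_injective.1 hcnt
  set S : ℕ → Set ℝ := fun j => Icc (0:ℝ) 1 ∩
    ball ((A (Nat.unpair j).1).1) ((1/2)^((Nat.unpair j).1 + (Nat.unpair j).2)) with hS
  have hSunc : ∀ j, ¬ (S j).Countable := fun j =>
    not_countable_Icc_inter_ball (hT _ (hAT (Nat.unpair j).1)) (by positivity)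
  obtain ⟨u, huinj, huS⟩ := exists_inj_seq S E hcnt hSunc
  set f : ℝ → ℝ := fun x =>
    if hx : x ∈ E then ((ι ⟨x, hx⟩ : ℕ) : ℝ)
    else if hx' : ∃ j, u j = x then (A (Nat.unpair (Classical.choose hx')).1).2
    else φ x with hf
  have hfE : ∀ x (hx : x ∈ E), f x = ((ι ⟨x, hx⟩ : ℕ) : ℝ) := by
    intro x hx; rw [hf]; simp only [dif_pos hx]
  have hfu : ∀ j, f (u j) = (A (Nat.unpair j).1).2 := by
    intro j
    have h1 : u j ∉ E := (huS j).2
    have hex : ∃ j', u j' = u j := ⟨j, rfl⟩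
    have h2 : Classical.choose hex = j := huinj (Classical.choose_spec hex)
    rw [hf]
    simp only [dif_neg h1, dif_pos hex]
    rw [h2]
  have hfφ : ∀ x, x ∉ E → (¬ ∃ j, u j = x) → f x = φ x := by
    intro x h1 h2; rw [hf]; simp only [dif_neg h1, dif_neg h2]
  have huIcc : ∀ j, u j ∈ Icc (0:ℝ) 1 := fun j => ((huS j).1).1
  -- Baire class 2
  have hB2 : Baire2 f := by
    set Cset := E ∪ range u with hCset
    have hCcnt : Cset.Countable := hcnt.union (countable_range u)
    obtain ⟨w, hw⟩ := hCcnt.exists_eq_range ⟨u 0, Or.inr ⟨0, rfl⟩⟩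
    set corr : ℕ → ℝ → ℝ := fun j x =>
      ∑ c ∈ Finset.image w (Finset.range j), (f c - φ c) *
        (if x ∈ ({c} : Set ℝ) then (1:ℝ) else 0) with hcorr
    have hcorrb1 : ∀ j, Baire1 (corr j) := by
      intro j
      apply baire1_sum
      intro c _
      exact (baire1_continuous _ continuous_const).mul (baire1_indicator isClosed_singleton)
    have hcorr_eval : ∀ j x, corr j x =
        if x ∈ Finset.image w (Finset.range j) then f x - φ x else 0 := by
      intro j x
      by_cases hx : x ∈ Finset.image w (Finset.range j)
      · rw [if_pos hx]
        show (∑ c ∈ Finset.image w (Finset.range j), (f c - φ c) *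
          (if x ∈ ({c} : Set ℝ) then (1:ℝ) else 0)) = f x - φ x
        rw [Finset.sum_eq_single_of_mem x hx]
        · simp [mem_singleton_iff]
        · intro b _ hbx
          simp only [mem_singleton_iff]
          rw [if_neg (fun h => hbx h.symm), mul_zero]
      · rw [if_neg hx]
        show (∑ c ∈ Finset.image w (Finset.range j), (f c - φ c) *
          (if x ∈ ({c} : Set ℝ) then (1:ℝ) else 0)) = 0
        apply Finset.sum_eq_zero
        intro b hb
        have hbx : b ≠ x := fun h => hx (h ▸ hb)
        simp only [mem_singleton_iff]
        rw [if_neg (fun h => hbx h.symm), mul_zero]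
    refine ⟨fun j x => τ j x + corr j x, fun j => (hτb1 j).add (hcorrb1 j), ?_⟩
    intro x hxI
    by_cases hxC : x ∈ Cset
    · obtain ⟨mx, hmx⟩ : ∃ mx, w mx = x := by rw [hw] at hxC; exact hxC
      have h1 : Tendsto (fun j => τ j x + (f x - φ x)) atTop (𝓝 (φ x + (f x - φ x))) :=
        (hτlim x).add tendsto_const_nhds
      have h2 : ∀ᶠ j in atTop, τ j x + (f x - φ x) = τ j x + corr j x := by
        filter_upwards [eventually_ge_atTop (mx+1)] with j hj
        have hxmem : x ∈ Finset.image w (Finset.range j) :=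
          Finset.mem_image.2 ⟨mx, Finset.mem_range.2 (by omega), hmx⟩
        rw [hcorr_eval j x, if_pos hxmem]
      have h3 := Tendsto.congr' h2 h1
      have h4 : φ x + (f x - φ x) = f x := by ring
      rwa [h4] at h3
    · have hfx : f x = φ x := by
        apply hfφ
        · exact fun h => hxC (Or.inl h)
        · rintro ⟨j, hj⟩; exact hxC (Or.inr ⟨j, hj⟩)
      have hcorr0 : ∀ j, corr j x = 0 := by
        intro j
        rw [hcorr_eval, if_neg]
        intro hmem
        obtain ⟨b, _, hb2⟩ := Finset.mem_image.1 hmem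
        apply hxC
        rw [hw]
        exact ⟨b, hb2⟩
      have heq : (fun j => τ j x + corr j x) = fun j => τ j x :=
        funext fun j => by rw [hcorr0 j, add_zero]
      rw [heq, hfx]
      exact hτlim x
  refine ⟨f, hB2, ?_⟩
  set G := graphOn (Icc 0 1) f with hG
  apply Set.Subset.antisymm
  · -- accPts G ⊆ T
    intro p hp
    by_contra hpT
    have hop : IsOpen Tᶜ := hTc.isOpen_compl
    rw [Metric.isOpen_iff] at hop
    obtain ⟨ε, hε, hball⟩ := hop p hpT
    set r := ε/3 with hr
    have hr0 : 0 < r := by rw [hr]; linarith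
    have hrT : ∀ q', dist q' p ≤ 2*r → q' ∉ T := by
      intro q' hq' hq'T
      exact hball (show q' ∈ ball p ε by rw [mem_ball]; rw [hr] at hq'; linarith) hq'T
    obtain ⟨Nmax, hNmax⟩ := exists_pow_lt_of_lt_one hr0 (show (1:ℝ)/2 < 1 by norm_num)
    have hp' : AccPt p (𝓟 G) := hp
    apply not_accPt_of_finite_inter (Metric.ball_mem_nhds p hr0) ?_ hp'
    have hsub : G ∩ ball p r ⊆
        ((fun j => (u j, f (u j))) '' {j | (Nat.unpair j).1 + (Nat.unpair j).2 < Nmax}) ∪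
        ((fun e : ↥E => ((e : ℝ), f e)) '' {e | (ι e : ℕ) < ⌈p.2 + r⌉₊}) := by
      rintro ⟨x, y⟩ ⟨⟨hxI, (hy : y = f x)⟩, hbll⟩
      subst hy
      rw [mem_ball, Prod.dist_eq] at hbll
      have hd1 : dist x p.1 < r := lt_of_le_of_lt (le_max_left _ _) hbll
      have hd2 : dist (f x) p.2 < r := lt_of_le_of_lt (le_max_right _ _) hbll
      by_cases hxE : x ∈ E
      · right
        refine ⟨⟨x, hxE⟩, ?_, rfl⟩
        show (ι ⟨x, hxE⟩ : ℕ) < ⌈p.2 + r⌉₊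
        rw [Nat.lt_ceil]
        have := hfE x hxE
        rw [Real.dist_eq] at hd2
        have h2 := abs_lt.1 hd2
        rw [this] at h2
        linarith [h2.1, h2.2]
      · by_cases hxu : ∃ j, u j = x
        · obtain ⟨j, rfl⟩ := hxu
          left
          refine ⟨j, ?_, rfl⟩
          show (Nat.unpair j).1 + (Nat.unpair j).2 < Nmax
          by_contra hge
          push_neg at hge
          have hpow : (1/2:ℝ)^((Nat.unpair j).1 + (Nat.unpair j).2) < r :=
            lt_of_le_of_lt (pow_le_pow_of_le_one (by norm_num) (by norm_num) hge) hNmax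
          apply hrT (A (Nat.unpair j).1) ?_ (hAT (Nat.unpair j).1)
          have hj := (huS j).1
          have hj2 : dist (u j) ((A (Nat.unpair j).1).1) <
              (1/2)^((Nat.unpair j).1 + (Nat.unpair j).2) := hj.2
          have hAn2 : (A (Nat.unpair j).1).2 = f (u j) := (hfu j).symm
          rw [Prod.dist_eq]
          apply max_le
          · calc dist (A (Nat.unpair j).1).1 p.1
                ≤ dist (A (Nat.unpair j).1).1 (u j) + dist (u j) p.1 := dist_triangle _ _ _
            _ ≤ 2*r := by
                rw [dist_comm] at hj2
                linarith [hj2, hd1]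
          · rw [hAn2]
            linarith [hd2]
        · exfalso
          have hfx : f x = φ x := hfφ x hxE hxu
          have hfib : ∃ y, (x, y) ∈ T := by
            by_contra hno; push_neg at hno; exact hxE ⟨hxI, hno⟩
          have hptT : (x, f x) ∈ T := by rw [hfx]; exact hφsel x hfib
          apply hrT (x, f x) ?_ hptT
          rw [Prod.dist_eq]
          exact max_le (by linarith) (by linarith)
    apply Set.Finite.subset ?_ hsub
    apply Set.Finite.union
    · apply Set.Finite.image
      have hunpair_inj : Function.Injective Nat.unpair := by
        intro a b h
        have := congrArg (fun q : ℕ×ℕ => Nat.pair q.1 q.2) h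
        simpa [Nat.pair_unpair] using this
      have hfin : ({q : ℕ×ℕ | q.1 + q.2 < Nmax}).Finite := by
        apply Set.Finite.subset ((Set.finite_Iio Nmax).prod (Set.finite_Iio Nmax))
        rintro ⟨a, b⟩ h
        simp only [mem_setOf_eq] at h
        exact ⟨by simp only [mem_Iio]; omega, by simp only [mem_Iio]; omega⟩
      exact (hfin.preimage hunpair_inj.injOn).subset (fun j hj => hj)
    · apply Set.Finite.image
      exact ((Set.finite_Iio (⌈p.2 + r⌉₊)).preimage hι.injOn).subset (fun e he => he)
  · -- T ⊆ accPts G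
    intro p hpT
    show AccPt p (𝓟 G)
    rw [accPt_iff_nhds]
    intro U hU
    obtain ⟨ε, hε, hballU⟩ := Metric.mem_nhds_iff.1 hU
    obtain ⟨n, hn⟩ := hAdense p hpT (ε/2) (by linarith)
    obtain ⟨M, hM⟩ := exists_pow_lt_of_lt_one (show (0:ℝ) < ε/2 by linarith)
      (by norm_num : (1:ℝ)/2 < 1)
    have hdA1 : dist (A n).1 p.1 < ε/2 := by
      rw [Prod.dist_eq] at hn
      exact lt_of_le_of_lt (le_max_left _ _) hn
    have hdA2 : dist (A n).2 p.2 < ε/2 := by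
      rw [Prod.dist_eq] at hn
      exact lt_of_le_of_lt (le_max_right _ _) hn
    have hzmem : ∀ k, M ≤ k →
        ((u (Nat.pair n k), f (u (Nat.pair n k))) ∈ G ∩ ball p ε) := by
      intro k hk
      have hfval : f (u (Nat.pair n k)) = (A n).2 := by
        rw [hfu]; rw [Nat.unpair_pair]
      have hu := (huS (Nat.pair n k)).1
      rw [hS] at hu
      simp only [Nat.unpair_pair] at hu
      constructor
      · exact ⟨hu.1, rfl⟩
      · rw [mem_ball, Prod.dist_eq]
        apply max_lt
        · have hub : dist (u (Nat.pair n k)) ((A n).1) < (1/2)^(n+k) := hu.2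
          have hpw : ((1:ℝ)/2)^(n+k) ≤ (1/2)^M :=
            pow_le_pow_of_le_one (by norm_num) (by norm_num) (by omega)
          calc dist (u (Nat.pair n k)) p.1
              ≤ dist (u (Nat.pair n k)) ((A n).1) + dist ((A n).1) p.1 := dist_triangle _ _ _
          _ < ε := by linarith
        · rw [hfval]; linarith
    by_cases hcase : (u (Nat.pair n M), f (u (Nat.pair n M))) = p
    · refine ⟨(u (Nat.pair n (M+1)), f (u (Nat.pair n (M+1)))),
        ⟨hballU (hzmem (M+1) (by omega)).2, (hzmem (M+1) (by omega)).1⟩, ?_⟩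
      intro hC
      have h1 := congrArg Prod.fst hcase
      have h2 := congrArg Prod.fst hC
      simp only at h1 h2
      have h3 : Nat.pair n (M+1) = Nat.pair n M := huinj (h2.trans h1.symm)
      have h4 := congrArg (fun j => (Nat.unpair j).2) h3
      simp only [Nat.unpair_pair] at h4
      omega
    · exact ⟨(u (Nat.pair n M), f (u (Nat.pair n M))),
        ⟨hballU (hzmem M le_rfl).2, (hzmem M le_rfl).1⟩, hcase⟩

theorem stmt8 (T : Set (ℝ × ℝ)) (hT : ∀ p ∈ T, p.1 ∈ Icc (0:ℝ) 1) :
    (∃ f : ℝ → ℝ, Baire2 f ∧ accPts (graphOn (Icc 0 1) f) = T) ↔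
      (IsClosed T ∧ {x ∈ Icc (0:ℝ) 1 | ∀ y : ℝ, (x, y) ∉ T}.Countable) := by
  constructor
  · rintro ⟨f, -, rfl⟩
    exact ⟨isClosed_accPts _, forward_dir f⟩
  · rintro ⟨hTc, hcnt⟩
    exact reverse_dir T hT hTc hcnt
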